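/- Supported answers generalize answers: if ⟨θ, ∅, E⟩ is a supported answer to Q over D_τ (empty hypothesis set), then θ is an answer to Q over D_τ; and if ⟨θ, H, E⟩ is a supported answer to Q over D_τ, then there exist τ' ≥ τ and a data stream D' with D'_τ = D_τ such that θ is an answer to Q over D'_{τ'}. -/

import Mathlib

/-- Abstract framework for continuous queries: facts, substitutions, a monotone
entailment relation, timestamps, EDB facts, and the ground query head `goal θ = Pθ`. -/
structure QFrame (Fact Subst : Type) where
  entails : Set Fact → Fact → Prop
  mono : ∀ {S S' : Set Fact} {f : Fact}, S ⊆ S' → entails S f → entails S' f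
  ts : Fact → ℕ
  edb : Fact → Prop
  goal : Subst → Fact

variable {Fact Subst : Type}

/-- The τ-history of a data stream `D`: facts with timestamp at most `τ`.
(With `τ = -1` this is the empty dataset.) -/
def QFrame.hist (M : QFrame Fact Subst) (D : Set Fact) (τ : ℤ) : Set Fact :=
  {f ∈ D | (M.ts f : ℤ) ≤ τ}

/-- `⟨θ, H⟩` is a hypothetical answer to `Q = ⟨P, Π⟩` over `D_τ`. -/
def QFrame.IsHypAns (M : QFrame Fact Subst) (Prg D : Set Fact) (τ : ℤ)
    (θ : Subst) (H : Set Fact) : Prop :=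
  H.Finite ∧ (∀ f ∈ H, M.edb f ∧ τ < (M.ts f : ℤ)) ∧
  M.entails (Prg ∪ M.hist D τ ∪ H) (M.goal θ) ∧
  ∀ H' ⊆ H, M.entails (Prg ∪ M.hist D τ ∪ H') (M.goal θ) → H' = H

/-- `θ` is an answer to `Q` over `D_τ` in the standard sense. -/
def QFrame.IsAns (M : QFrame Fact Subst) (Prg D : Set Fact) (τ : ℤ) (θ : Subst) : Prop :=
  M.entails (Prg ∪ M.hist D τ) (M.goal θ)

/-- `⟨θ, H, E⟩` is a supported answer to `Q` over `D_τ`: `⟨θ,H⟩` is a hypothetical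
answer and `E ⊆ D_τ` is nonempty evidence, minimal with `Π ∪ E ∪ H ⊨ Pθ`. -/
def QFrame.IsSuppAns (M : QFrame Fact Subst) (Prg D : Set Fact) (τ : ℤ)
    (θ : Subst) (H E : Set Fact) : Prop :=
  M.IsHypAns Prg D τ θ H ∧ E ⊆ M.hist D τ ∧ E.Nonempty ∧
  M.entails (Prg ∪ E ∪ H) (M.goal θ) ∧
  ∀ E' ⊆ E, M.entails (Prg ∪ E' ∪ H) (M.goal θ) → E' = E

/-- Supported answers generalize answers: if `⟨θ, ∅, E⟩` is a supported answer to
`Q` over `D_τ` then `θ` is an answer over `D_τ`; and if `⟨θ, H, E⟩` is a supported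
answer over `D_τ` then there are `τ' ≥ τ` and a data stream `D'` with
`D'_τ = D_τ` such that `θ` is an answer to `Q` over `D'_{τ'}`. -/
theorem stmt_19 (M : QFrame Fact Subst) (Prg D : Set Fact) (τ : ℤ) :
    (∀ (θ : Subst) (E : Set Fact), M.IsSuppAns Prg D τ θ ∅ E → M.IsAns Prg D τ θ) ∧
    (∀ (θ : Subst) (H E : Set Fact), M.IsSuppAns Prg D τ θ H E →
      ∃ τ' : ℤ, τ ≤ τ' ∧ ∃ D' : Set Fact,
        M.hist D' τ = M.hist D τ ∧ M.IsAns Prg D' τ' θ) := by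
  constructor
  · rintro θ E ⟨⟨_, _, hent, _⟩, _⟩
    simpa [Set.union_empty, QFrame.IsAns] using hent
  · rintro θ H E ⟨⟨hfin, hts, hent, _⟩, _⟩
    obtain ⟨b, hb⟩ : ∃ b : ℤ, ∀ f ∈ H, (M.ts f : ℤ) ≤ b := by
      rcases ((hfin.image fun f => (M.ts f : ℤ)).bddAbove) with ⟨b, hb⟩
      exact ⟨b, fun f hf => hb ⟨f, hf, rfl⟩⟩
    refine ⟨max τ b, le_max_left _ _, D ∪ H, ?_, ?_⟩
    · ext f
      simp only [QFrame.hist, Set.mem_setOf_eq, Set.mem_union]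
      constructor
      · rintro ⟨hf | hf, hle⟩
        · exact ⟨hf, hle⟩
        · exact absurd hle (not_le.2 (hts f hf).2)
      · rintro ⟨hf, hle⟩; exact ⟨Or.inl hf, hle⟩
    · refine M.mono ?_ hent
      intro f hf
      rcases hf with hf | hf
      rcases hf with hf | hf
      · exact Or.inl hf
      · exact Or.inr ⟨Or.inl hf.1, hf.2.trans (le_max_left _ _)⟩
      · exact Or.inr ⟨Or.inr hf, (hb f hf).trans (le_max_right _ _)⟩
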